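/- Let G be a Gerstenhaber algebra with G^i = 0 for all i < 0, which is generated as a k-algebra by G^0 ∪ G^1. Then every quasi-BV structure Δ on G satisfies Δ∘Δ = 0; that is, for such G the axiom (qBV2) is equivalent to the Batalin–Vilkovisky axiom (BV2): Δ² = 0. -/

import Mathlib

/-- A Gerstenhaber bracket on a ℤ-graded (graded-commutative) associative unital
`k`-algebra `A` with grading `𝒜`: a `k`-bilinear bracket of degree `-1` satisfying
graded antisymmetry (G1), the graded Jacobi identity (G2) and the graded Leibniz
(odd Poisson) rule (G3); graded commutativity of the product is also recorded. -/
structure GerstenhaberBracket (k A : Type) [Field k] [CharZero k] [Ring A] [Algebra k A]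
    (𝒜 : ℤ → Submodule k A) [GradedAlgebra 𝒜] where
  br : A →ₗ[k] A →ₗ[k] A
  br_mem : ∀ {i j : ℤ} {x y : A}, x ∈ 𝒜 i → y ∈ 𝒜 j → br x y ∈ 𝒜 (i + j - 1)
  gcomm : ∀ {i j : ℤ} {x y : A}, x ∈ 𝒜 i → y ∈ 𝒜 j →
    x * y = ((-1 : k) ^ (i * j)) • (y * x)
  g1 : ∀ {i j : ℤ} {x y : A}, x ∈ 𝒜 i → y ∈ 𝒜 j →
    br x y = -(((-1 : k) ^ ((i - 1) * (j - 1))) • br y x)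
  g2 : ∀ {i j l : ℤ} {x y z : A}, x ∈ 𝒜 i → y ∈ 𝒜 j → z ∈ 𝒜 l →
    br x (br y z) = br (br x y) z + ((-1 : k) ^ ((i - 1) * (j - 1))) • br y (br x z)
  g3 : ∀ {i j l : ℤ} {x y z : A}, x ∈ 𝒜 i → y ∈ 𝒜 j → z ∈ 𝒜 l →
    br x (y * z) = br x y * z + ((-1 : k) ^ (j * (i - 1))) • (y * br x z)

/-- if `G` is a Gerstenhaber algebra concentrated in nonnegative degrees
and generated as a `k`-algebra by `G^0 ∪ G^1`, then every quasi-BV structure `Δ` on `G`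
satisfies `Δ ∘ Δ = 0` (i.e. (qBV2) is equivalent to the BV axiom (BV2)). -/
theorem qBV_implies_BV_of_generated_in_low_degrees
    (k A : Type) [Field k] [CharZero k] [Ring A] [Algebra k A]
    (𝒜 : ℤ → Submodule k A) [GradedAlgebra 𝒜]
    (G : GerstenhaberBracket k A 𝒜)
    (hneg : ∀ i : ℤ, i < 0 → 𝒜 i = ⊥)
    (hgen : Algebra.adjoin k ((𝒜 0 : Set A) ∪ (𝒜 1 : Set A)) = ⊤)
    (Δ : A →ₗ[k] A)
    (hdeg : ∀ (i : ℤ) (x : A), x ∈ 𝒜 i → Δ x ∈ 𝒜 (i - 1))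
    (hBV1 : ∀ (i j : ℤ) (x y : A), x ∈ 𝒜 i → y ∈ 𝒜 j →
      Δ (x * y) - Δ x * y - ((-1 : k) ^ i) • (x * Δ y) = ((-1 : k) ^ i) • G.br x y)
    (hqBV2 : ∀ (i j : ℤ) (x y : A), x ∈ 𝒜 i → y ∈ 𝒜 j →
      Δ (Δ (x * y)) = Δ (Δ x) * y + x * Δ (Δ y)) :
    ∀ x : A, Δ (Δ x) = 0 := by
  -- D := Δ ∘ Δ
  set D : A →ₗ[k] A := Δ.comp Δ with hD
  have hDx : ∀ x, Δ (Δ x) = D x := fun x => rfl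
  -- Leibniz for homogeneous x, arbitrary y
  have leib1 : ∀ (i : ℤ) (x : A), x ∈ 𝒜 i → ∀ y : A, D (x * y) = D x * y + x * D y := by
    intro i x hx y
    induction y using DirectSum.Decomposition.inductionOn 𝒜 with
    | zero => simp
    | homogeneous m =>
        obtain ⟨y, hy⟩ := m
        exact hqBV2 _ _ _ _ hx hy
    | add a b ha hb =>
        simp only [mul_add, map_add, ha, hb]
        abel
  -- Leibniz in general
  have leib : ∀ x y : A, D (x * y) = D x * y + x * D y := by
    intro x
    induction x using DirectSum.Decomposition.inductionOn 𝒜 with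
    | zero => simp
    | homogeneous m =>
        obtain ⟨x, hx⟩ := m
        exact leib1 _ _ hx
    | add a b ha hb =>
        intro y
        simp only [add_mul, map_add, ha, hb]
        abel
  -- D vanishes on degrees 0 and 1
  have hlow : ∀ (i : ℤ) (x : A), i ≤ 1 → x ∈ 𝒜 i → D x = 0 := by
    intro i x hi hx
    have h2 : Δ (Δ x) ∈ 𝒜 (i - 1 - 1) := hdeg _ _ (hdeg _ _ hx)
    have : 𝒜 (i - 1 - 1) = ⊥ := hneg _ (by omega)
    rw [this] at h2
    exact (by simpa using h2 : Δ (Δ x) = 0)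
  intro x
  rw [hDx]
  have hx : x ∈ Algebra.adjoin k ((𝒜 0 : Set A) ∪ (𝒜 1 : Set A)) := by
    rw [hgen]; trivial
  induction hx using Algebra.adjoin_induction with
  | mem z hz =>
      rcases hz with hz | hz
      · exact hlow 0 z (by norm_num) hz
      · exact hlow 1 z le_rfl hz
  | algebraMap r =>
      have h1 : (1 : A) ∈ 𝒜 0 := SetLike.GradedOne.one_mem
      have : (algebraMap k A r) = r • (1 : A) := by
        rw [Algebra.smul_def, mul_one]
      rw [this, map_smul, hlow 0 1 (by norm_num) h1, smul_zero]
  | add a b _ _ ha hb => rw [map_add, ha, hb, add_zero]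
  | mul a b _ _ ha hb => rw [leib, ha, hb, zero_mul, mul_zero, add_zero]
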